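/- IGD satisfies a triangle-type bound: for nonempty finite sets A, B, Γ in a metric space, IGD(A,Γ) ≤ IGD(B,Γ) + max_{b∈B} min_{a∈A} dist(b,a). -/

import Mathlib

theorem igd_triangle {α : Type*} [MetricSpace α]
    (Γ A B : Finset α) (hΓ : Γ.Nonempty) (hA : A.Nonempty) (hB : B.Nonempty) :
    ((1 : ℝ) / Γ.card) * ∑ γ ∈ Γ, (A.inf' hA fun a => dist γ a) ≤
      ((1 : ℝ) / Γ.card) * ∑ γ ∈ Γ, (B.inf' hB fun b => dist γ b) +
        B.sup' hB (fun b => A.inf' hA fun a => dist b a) := by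
  set S := B.sup' hB (fun b => A.inf' hA fun a => dist b a) with hS
  have key : ∀ γ ∈ Γ, (A.inf' hA fun a => dist γ a) ≤
      (B.inf' hB fun b => dist γ b) + S := by
    intro γ _
    obtain ⟨b, hb, hbmin⟩ := B.exists_mem_eq_inf' hB (fun b => dist γ b)
    rw [hbmin]
    obtain ⟨a, ha, hamin⟩ := A.exists_mem_eq_inf' hA (fun a => dist b a)
    calc (A.inf' hA fun a => dist γ a) ≤ dist γ a := Finset.inf'_le _ ha
      _ ≤ dist γ b + dist b a := dist_triangle _ _ _
      _ = dist γ b + (A.inf' hA fun a => dist b a) := by rw [← hamin]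
      _ ≤ dist γ b + S := by
          exact add_le_add_right (Finset.le_sup' (fun b => A.inf' hA fun a => dist b a) hb) _
  have hc : (0 : ℝ) < Γ.card := by exact_mod_cast Finset.card_pos.mpr hΓ
  have hsum : ∑ γ ∈ Γ, (A.inf' hA fun a => dist γ a) ≤
      ∑ γ ∈ Γ, (B.inf' hB fun b => dist γ b) + Γ.card * S := by
    calc ∑ γ ∈ Γ, (A.inf' hA fun a => dist γ a)
        ≤ ∑ γ ∈ Γ, ((B.inf' hB fun b => dist γ b) + S) := Finset.sum_le_sum key
      _ = ∑ γ ∈ Γ, (B.inf' hB fun b => dist γ b) + Γ.card * S := by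
          rw [Finset.sum_add_distrib, Finset.sum_const, nsmul_eq_mul]
  have := mul_le_mul_of_nonneg_left hsum (le_of_lt (one_div_pos.mpr hc))
  calc ((1 : ℝ) / Γ.card) * ∑ γ ∈ Γ, (A.inf' hA fun a => dist γ a)
      ≤ ((1 : ℝ) / Γ.card) * (∑ γ ∈ Γ, (B.inf' hB fun b => dist γ b) + Γ.card * S) := this
    _ = ((1 : ℝ) / Γ.card) * ∑ γ ∈ Γ, (B.inf' hB fun b => dist γ b) + S := by
        field_simp
    _ ≤ _ := le_refl _
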